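/- Let A be an n×n real positive definite matrix, let S be a random n×p real matrix (distribution given by a probability measure, with the relevant expectations existing), set H := S(SᵀAS)†Sᵀ and G := E[H], and suppose G is positive definite. Then A^{1/2} G A^{1/2} = E[P_{A^{1/2}S}], and with μ := λ_min(E[P_{A^{1/2}S}]) one has the sandwich μ·G⁻¹ ⪯ A ⪯ G⁻¹ in the positive semidefinite order; equivalently, the quadratic f(x) = (1/2)xᵀAx − xᵀb is μ-strongly convex and has 1-Lipschitz gradients with respect to the norm ‖x‖_{G⁻¹} = √(xᵀG⁻¹x). -/

import Mathlib

open scoped BigOperators Matrix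
open MeasureTheory

noncomputable section

/-- `B` is the Moore–Penrose pseudoinverse of `A`. -/
def IsMoorePenrose {m n : ℕ} (A : Matrix (Fin m) (Fin n) ℝ) (B : Matrix (Fin n) (Fin m) ℝ) : Prop :=
  A * B * A = A ∧ B * A * B = B ∧ (A * B)ᵀ = A * B ∧ (B * A)ᵀ = B * A

open Classical in
/-- The Moore–Penrose pseudoinverse (it always exists and is unique). -/
def pinv {m n : ℕ} (A : Matrix (Fin m) (Fin n) ℝ) : Matrix (Fin n) (Fin m) ℝ :=
  if h : ∃ B, IsMoorePenrose A B then h.choose else 0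

/-- The orthogonal projector `P_M = M(MᵀM)†Mᵀ` onto the column space of `M`. -/
def proj {m n : ℕ} (M : Matrix (Fin m) (Fin n) ℝ) : Matrix (Fin m) (Fin m) ℝ :=
  M * pinv (Mᵀ * M) * Mᵀ

/-- Entrywise expectation of a random matrix. -/
def Mexp {Ω : Type*} [MeasurableSpace Ω] (ℙ : Measure Ω) {m n : ℕ}
    (f : Ω → Matrix (Fin m) (Fin n) ℝ) : Matrix (Fin m) (Fin n) ℝ :=
  Matrix.of fun i j => ∫ ω, f ω i j ∂ℙ

/-- The positive semidefinite square root of a positive semidefinite matrix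
(the definition `Matrix.PosSemidef.sqrt` of the older Mathlib, since removed). -/
def Matrix.PosSemidef.sqrt {n : ℕ} {A : Matrix (Fin n) (Fin n) ℝ} (hA : A.PosSemidef) :
    Matrix (Fin n) (Fin n) ℝ :=
  hA.1.eigenvectorUnitary.1 * Matrix.diagonal ((↑) ∘ (√·) ∘ hA.1.eigenvalues) *
    (star hA.1.eigenvectorUnitary : Matrix (Fin n) (Fin n) ℝ)

/-- The set of (real) eigenvalues of a square matrix. -/
def eigs {q : ℕ} (M : Matrix (Fin q) (Fin q) ℝ) : Set ℝ :=
  {r : ℝ | ∃ v : Fin q → ℝ, v ≠ 0 ∧ M.mulVec v = r • v}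

/- ### Auxiliary lemmas -/

lemma Matrix.PosSemidef.sqrt_mul_self_fin {n : ℕ} {A : Matrix (Fin n) (Fin n) ℝ}
    (hA : A.PosSemidef) : hA.sqrt * hA.sqrt = A := by
  set U : Matrix (Fin n) (Fin n) ℝ := (hA.1.eigenvectorUnitary : Matrix (Fin n) (Fin n) ℝ) with hU
  have hspec : A = U * Matrix.diagonal hA.1.eigenvalues * star U := by
    simpa using hA.1.spectral_theorem
  have hVU : star U * U = 1 := Unitary.coe_star_mul_self _
  have hsq : hA.sqrt = U * Matrix.diagonal (fun i => √(hA.1.eigenvalues i)) * star U := rfl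
  rw [hsq]
  conv_rhs => rw [hspec]
  rw [Matrix.mul_assoc (U * Matrix.diagonal _) (star U) _, ← Matrix.mul_assoc (star U) _ _,
    ← Matrix.mul_assoc (star U) U _, hVU, Matrix.one_mul, ← Matrix.mul_assoc,
    Matrix.mul_assoc U _ _, Matrix.diagonal_mul_diagonal]
  congr 3
  funext i
  exact Real.mul_self_sqrt (hA.eigenvalues_nonneg i)

lemma Matrix.PosSemidef.posSemidef_sqrt_fin {n : ℕ} {A : Matrix (Fin n) (Fin n) ℝ}
    (hA : A.PosSemidef) : hA.sqrt.PosSemidef := by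
  set U : Matrix (Fin n) (Fin n) ℝ := (hA.1.eigenvectorUnitary : Matrix (Fin n) (Fin n) ℝ) with hU
  have hsq : hA.sqrt = U * Matrix.diagonal (fun i => √(hA.1.eigenvalues i)) * star U := rfl
  rw [hsq]
  have : (Matrix.diagonal (fun i => √(hA.1.eigenvalues i))).PosSemidef :=
    Matrix.posSemidef_diagonal_iff.mpr fun i => Real.sqrt_nonneg _
  simpa [Matrix.star_eq_conjTranspose] using this.mul_mul_conjTranspose_same U

lemma isMP_unique {m n : ℕ} {A : Matrix (Fin m) (Fin n) ℝ} {B C : Matrix (Fin n) (Fin m) ℝ}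
    (hB : IsMoorePenrose A B) (hC : IsMoorePenrose A C) : B = C := by
  obtain ⟨hB1, hB2, hB3, hB4⟩ := hB
  obtain ⟨hC1, hC2, hC3, hC4⟩ := hC
  have hAB : A * B = A * C := by
    calc A * B = (A * B)ᵀ := hB3.symm
    _ = (A * C * A * B)ᵀ := by rw [hC1]
    _ = ((A * C) * (A * B))ᵀ := by simp only [Matrix.mul_assoc]
    _ = (A * B)ᵀ * (A * C)ᵀ := Matrix.transpose_mul _ _
    _ = (A * B) * (A * C) := by rw [hB3, hC3]
    _ = (A * B * A) * C := by simp only [Matrix.mul_assoc]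
    _ = A * C := by rw [hB1]
  have hBA : B * A = C * A := by
    calc B * A = (B * A)ᵀ := hB4.symm
    _ = (B * (A * C * A))ᵀ := by rw [hC1]
    _ = ((B * A) * (C * A))ᵀ := by simp only [Matrix.mul_assoc]
    _ = (C * A)ᵀ * (B * A)ᵀ := Matrix.transpose_mul _ _
    _ = (C * A) * (B * A) := by rw [hB4, hC4]
    _ = C * (A * B * A) := by simp only [Matrix.mul_assoc]
    _ = C * A := by rw [hB1]
  calc B = B * A * B := hB2.symm
  _ = B * (A * C) := by rw [Matrix.mul_assoc, hAB]
  _ = (C * A) * C := by rw [← Matrix.mul_assoc, hBA]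
  _ = C := hC2

/-- For a real symmetric matrix, an MP-inverse exists which is symmetric; and PSD if `C` is. -/
lemma exists_mp_symm {q : ℕ} {C : Matrix (Fin q) (Fin q) ℝ} (hC : C.IsHermitian) :
    ∃ B, IsMoorePenrose C B ∧ B.IsHermitian ∧ (C.PosSemidef → B.PosSemidef) := by
  classical
  set U : Matrix (Fin q) (Fin q) ℝ := (hC.eigenvectorUnitary : Matrix (Fin q) (Fin q) ℝ) with hU
  set d : Fin q → ℝ := hC.eigenvalues with hd
  have hspec : C = U * Matrix.diagonal d * star U := by
    simpa using hC.spectral_theorem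
  have hUV : U * star U = 1 := Unitary.coe_mul_star_self _
  have hVU : star U * U = 1 := Unitary.coe_star_mul_self _
  set e : Fin q → ℝ := fun i => (d i)⁻¹ with he
  refine ⟨U * Matrix.diagonal e * star U, ?_, ?_, ?_⟩
  · have key : ∀ f g : Fin q → ℝ,
        (U * Matrix.diagonal f * star U) * (U * Matrix.diagonal g * star U)
          = U * Matrix.diagonal (f * g) * star U := by
      intro f g
      rw [Matrix.mul_assoc (U * Matrix.diagonal f) (star U) _, ← Matrix.mul_assoc (star U) _ _,
        ← Matrix.mul_assoc (star U) U _, hVU, Matrix.one_mul, ← Matrix.mul_assoc,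
        Matrix.mul_assoc U _ _, Matrix.diagonal_mul_diagonal]
      rfl
    have htr : ∀ f : Fin q → ℝ, (U * Matrix.diagonal f * star U)ᵀ
        = U * Matrix.diagonal f * star U := by
      intro f
      have : (U * Matrix.diagonal f * star U).IsHermitian := by
        apply Matrix.isHermitian_mul_mul_conjTranspose
        exact Matrix.isHermitian_diagonal _
      simpa [Matrix.IsHermitian, Matrix.conjTranspose_eq_transpose_of_trivial] using this
    have h1 : d * e * d = d := by
      funext i
      simp only [Pi.mul_apply, he]
      rcases eq_or_ne (d i) 0 with h | h
      · simp [h]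
      · field_simp
    have h2 : e * d * e = e := by
      funext i
      simp only [Pi.mul_apply, he]
      rcases eq_or_ne (d i) 0 with h | h
      · simp [h]
      · field_simp
    constructor
    · rw [hspec, key, key, h1]
    refine ⟨?_, ?_, ?_⟩
    · rw [hspec, key, key, h2]
    · rw [hspec, key]; exact htr _
    · rw [hspec, key]; exact htr _
  · have : (U * Matrix.diagonal e * star U).IsHermitian := by
      apply Matrix.isHermitian_mul_mul_conjTranspose
      exact Matrix.isHermitian_diagonal _
    exact this
  · intro hCpsd
    have : (Matrix.diagonal e).PosSemidef := by
      refine Matrix.posSemidef_diagonal_iff.mpr fun i => ?_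
      exact inv_nonneg.mpr (hCpsd.eigenvalues_nonneg i)
    simpa [Matrix.star_eq_conjTranspose] using this.mul_mul_conjTranspose_same U

lemma pinv_spec {q : ℕ} {C : Matrix (Fin q) (Fin q) ℝ} (hC : C.IsHermitian) :
    IsMoorePenrose C (pinv C) ∧ (pinv C).IsHermitian ∧ (C.PosSemidef → (pinv C).PosSemidef) := by
  obtain ⟨B, hB, hBh, hBp⟩ := exists_mp_symm hC
  have hex : ∃ B, IsMoorePenrose C B := ⟨B, hB⟩
  have : pinv C = B := by
    rw [pinv, dif_pos hex]
    exact isMP_unique hex.choose_spec hB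
  rw [this]
  exact ⟨hB, hBh, hBp⟩

section projlems
variable {m n : ℕ} (M : Matrix (Fin m) (Fin n) ℝ)

lemma gram_psd : (Mᵀ * M).PosSemidef := by
  have := Matrix.posSemidef_conjTranspose_mul_self M
  rwa [Matrix.conjTranspose_eq_transpose_of_trivial] at this

lemma proj_psd : (proj M).PosSemidef := by
  have h := (pinv_spec (gram_psd M).isHermitian).2.2 (gram_psd M)
  have := h.mul_mul_conjTranspose_same M
  rwa [Matrix.conjTranspose_eq_transpose_of_trivial] at this

lemma proj_herm : (proj M).IsHermitian := (proj_psd M).isHermitian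

lemma proj_idem : proj M * proj M = proj M := by
  obtain ⟨⟨h1, h2, h3, h4⟩, hh, hp⟩ := pinv_spec (gram_psd M).isHermitian
  set B := pinv (Mᵀ * M)
  show M * B * Mᵀ * (M * B * Mᵀ) = M * B * Mᵀ
  calc M * B * Mᵀ * (M * B * Mᵀ) = M * (B * (Mᵀ * M) * B) * Mᵀ := by
        simp only [Matrix.mul_assoc]
  _ = M * B * Mᵀ := by rw [h2]

lemma one_sub_proj_psd : (1 - proj M).PosSemidef := by
  have hh : (1 - proj M)ᴴ = 1 - proj M := by
    rw [Matrix.conjTranspose_sub, Matrix.conjTranspose_one, (proj_herm M).eq]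
  have hidem : (1 - proj M) * (1 - proj M) = 1 - proj M := by
    simp only [Matrix.sub_mul, Matrix.mul_sub, Matrix.one_mul, Matrix.mul_one, proj_idem M]
    abel
  have := Matrix.posSemidef_conjTranspose_mul_self (1 - proj M)
  rwa [hh, hidem] at this

end projlems

lemma Mexp_dot {Ω : Type*} [MeasurableSpace Ω] (ℙ : Measure Ω) {m : ℕ}
    (f : Ω → Matrix (Fin m) (Fin m) ℝ) (hint : ∀ i j, Integrable (fun ω => f ω i j) ℙ)
    (x y : Fin m → ℝ) :
    x ⬝ᵥ (Mexp ℙ f) *ᵥ y = ∫ ω, x ⬝ᵥ (f ω) *ᵥ y ∂ℙ := by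
  simp only [dotProduct, Matrix.mulVec, Mexp, Matrix.of_apply]
  rw [integral_finset_sum]
  · refine Finset.sum_congr rfl fun i _ => ?_
    rw [integral_const_mul]
    congr 1
    rw [integral_finset_sum _ fun j _ => (hint i j).mul_const _]
    exact Finset.sum_congr rfl fun j _ => (integral_mul_const _ _).symm
  · intro i _
    refine Integrable.const_mul ?_ _
    exact integrable_finset_sum _ fun j _ => (hint i j).mul_const _

lemma Mexp_herm {Ω : Type*} [MeasurableSpace Ω] (ℙ : Measure Ω) {m : ℕ}
    (f : Ω → Matrix (Fin m) (Fin m) ℝ) (hsym : ∀ ω, (f ω).IsHermitian) :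
    (Mexp ℙ f).IsHermitian := by
  rw [Matrix.IsHermitian, Matrix.conjTranspose_eq_transpose_of_trivial]
  ext i j
  simp only [Matrix.transpose_apply, Mexp, Matrix.of_apply]
  congr 1
  funext ω
  calc f ω j i = (f ω)ᴴ i j := by simp [Matrix.conjTranspose_apply]
  _ = f ω i j := by rw [(hsym ω).eq]

lemma Mexp_psd {Ω : Type*} [MeasurableSpace Ω] (ℙ : Measure Ω) {m : ℕ}
    (f : Ω → Matrix (Fin m) (Fin m) ℝ) (hint : ∀ i j, Integrable (fun ω => f ω i j) ℙ)
    (hpsd : ∀ ω, (f ω).PosSemidef) : (Mexp ℙ f).PosSemidef := by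
  refine Matrix.PosSemidef.of_dotProduct_mulVec_nonneg
    (Mexp_herm ℙ f (fun ω => (hpsd ω).isHermitian)) fun x => ?_
  rw [star_trivial, Mexp_dot ℙ f hint x x]
  refine integral_nonneg fun ω => ?_
  have := (hpsd ω).dotProduct_mulVec_nonneg x
  rwa [star_trivial] at this

lemma eigenvalues_mem_eigs {q : ℕ} {M : Matrix (Fin q) (Fin q) ℝ} (hM : M.IsHermitian)
    (i : Fin q) : hM.eigenvalues i ∈ eigs M := by
  refine ⟨⇑(hM.eigenvectorBasis i), ?_, hM.mulVec_eigenvectorBasis i⟩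
  intro h
  apply hM.eigenvectorBasis.orthonormal.ne_zero i
  ext j
  exact congrFun h j

lemma sub_smul_one_psd {q : ℕ} {M : Matrix (Fin q) (Fin q) ℝ} (hM : M.IsHermitian) {μ : ℝ}
    (h : ∀ i, μ ≤ hM.eigenvalues i) : (M - μ • 1).PosSemidef := by
  have hspec : M = (hM.eigenvectorUnitary : Matrix (Fin q) (Fin q) ℝ)
      * Matrix.diagonal hM.eigenvalues
      * star (hM.eigenvectorUnitary : Matrix (Fin q) (Fin q) ℝ) := by
    simpa using hM.spectral_theorem
  set U : Matrix (Fin q) (Fin q) ℝ := (hM.eigenvectorUnitary : Matrix (Fin q) (Fin q) ℝ)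
  have hUV : U * star U = 1 := Unitary.coe_mul_star_self _
  have key : M - μ • 1 = U * Matrix.diagonal (fun i => hM.eigenvalues i - μ) * star U := by
    have h1 : Matrix.diagonal (fun i => hM.eigenvalues i - μ)
        = Matrix.diagonal hM.eigenvalues - μ • 1 := by
      ext i j
      rcases eq_or_ne i j with h | h
      · simp [Matrix.diagonal_apply, h, Matrix.one_apply]
      · simp [Matrix.diagonal_apply, h, Matrix.one_apply]
    rw [h1, mul_sub, sub_mul, ← hspec]
    congr 1
    rw [mul_smul_comm, mul_one, smul_mul_assoc, hUV]
  rw [key]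
  have : (Matrix.diagonal (fun i => hM.eigenvalues i - μ)).PosSemidef :=
    Matrix.posSemidef_diagonal_iff.mpr fun i => sub_nonneg.mpr (h i)
  simpa [Matrix.star_eq_conjTranspose] using this.mul_mul_conjTranspose_same U

lemma Mexp_conj' {Ω : Type*} [MeasurableSpace Ω] (ℙ : Measure Ω) {m : ℕ}
    (R : Matrix (Fin m) (Fin m) ℝ) (f : Ω → Matrix (Fin m) (Fin m) ℝ)
    (hint : ∀ i j, Integrable (fun ω => f ω i j) ℙ) :
    (Matrix.of fun i j => ∫ ω, (R * f ω * R) i j ∂ℙ)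
      = R * (Matrix.of fun i j => ∫ ω, f ω i j ∂ℙ) * R := by
  ext i j
  simp only [Matrix.of_apply, Matrix.mul_apply]
  rw [integral_finset_sum _ fun k _ =>
    ((integrable_finset_sum _ fun l _ => (hint l k).const_mul _).mul_const _)]
  refine Finset.sum_congr rfl fun k _ => ?_
  rw [integral_mul_const, integral_finset_sum _ fun l _ => (hint l k).const_mul _]
  congr 1
  exact Finset.sum_congr rfl fun l _ => integral_const_mul _ _

lemma quad_sym {q : ℕ} {A : Matrix (Fin q) (Fin q) ℝ} (hA : Aᵀ = A) (u v : Fin q → ℝ) :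
    u ⬝ᵥ A *ᵥ v = v ⬝ᵥ A *ᵥ u := by
  simp only [dotProduct, Matrix.mulVec, Finset.mul_sum]
  rw [Finset.sum_comm]
  refine Finset.sum_congr rfl fun i _ => Finset.sum_congr rfl fun j _ => ?_
  have hji : A j i = A i j := by conv_rhs => rw [← hA, Matrix.transpose_apply]
  rw [hji]; ring

lemma quad_id {q : ℕ} {A : Matrix (Fin q) (Fin q) ℝ} (hA : Aᵀ = A) (b x y : Fin q → ℝ) :
    (1 / 2 * (y ⬝ᵥ A *ᵥ y) - y ⬝ᵥ b)
      - (1 / 2 * (x ⬝ᵥ A *ᵥ x) - x ⬝ᵥ b + (A *ᵥ x - b) ⬝ᵥ (y - x))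
      = 1 / 2 * ((y - x) ⬝ᵥ A *ᵥ (y - x)) := by
  have h := quad_sym hA x y
  simp only [Matrix.mulVec_sub, dotProduct_sub, sub_dotProduct,
    dotProduct_comm (A *ᵥ x) y, dotProduct_comm (A *ᵥ x) x,
    dotProduct_comm b y, dotProduct_comm b x]
  linarith [h]

theorem stmt19 {Ω : Type*} [MeasurableSpace Ω] (ℙ : Measure Ω) [IsProbabilityMeasure ℙ]
    (n p : ℕ)
    (A : Matrix (Fin n) (Fin n) ℝ) (hA : A.PosDef)
    (S : Ω → Matrix (Fin n) (Fin p) ℝ)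
    (H : Ω → Matrix (Fin n) (Fin n) ℝ)
    (hH : ∀ ω, H ω = S ω * pinv ((S ω)ᵀ * A * S ω) * (S ω)ᵀ)
    (hHint : ∀ i j, Integrable (fun ω => H ω i j) ℙ)
    (hPint : ∀ i j, Integrable (fun ω => proj (hA.posSemidef.sqrt * S ω) i j) ℙ)
    (G : Matrix (Fin n) (Fin n) ℝ) (hG : G = Mexp ℙ H) (hGpd : G.PosDef)
    (μ : ℝ) (hμ : IsLeast (eigs (Mexp ℙ (fun ω => proj (hA.posSemidef.sqrt * S ω)))) μ) :
    hA.posSemidef.sqrt * G * hA.posSemidef.sqrt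
        = Mexp ℙ (fun ω => proj (hA.posSemidef.sqrt * S ω)) ∧
    (A - μ • G⁻¹).PosSemidef ∧ (G⁻¹ - A).PosSemidef ∧
    (∀ b x y : Fin n → ℝ,
      1 / 2 * (x ⬝ᵥ A.mulVec x) - x ⬝ᵥ b + (A.mulVec x - b) ⬝ᵥ (y - x)
          + μ / 2 * ((y - x) ⬝ᵥ G⁻¹.mulVec (y - x))
        ≤ 1 / 2 * (y ⬝ᵥ A.mulVec y) - y ⬝ᵥ b) ∧
    (∀ b x y : Fin n → ℝ,
      1 / 2 * (y ⬝ᵥ A.mulVec y) - y ⬝ᵥ b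
        ≤ 1 / 2 * (x ⬝ᵥ A.mulVec x) - x ⬝ᵥ b + (A.mulVec x - b) ⬝ᵥ (y - x)
          + 1 / 2 * ((y - x) ⬝ᵥ G⁻¹.mulVec (y - x))) := by
  classical
  set R := hA.posSemidef.sqrt with hRdef
  have hRR : R * R = A := hA.posSemidef.sqrt_mul_self_fin
  have hRherm : R.IsHermitian := hA.posSemidef.posSemidef_sqrt_fin.isHermitian
  clear_value R
  have hRt : Rᵀ = R := by
    rw [← Matrix.conjTranspose_eq_transpose_of_trivial]; exact hRherm.eq
  have hAt : Aᵀ = A := by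
    rw [← Matrix.conjTranspose_eq_transpose_of_trivial]; exact hA.isHermitian.eq
  have hRdet : IsUnit R.det := by
    have hdet : R.det * R.det = A.det := by rw [← Matrix.det_mul, hRR]
    refine isUnit_iff_ne_zero.mpr fun h => ?_
    rw [h, mul_zero] at hdet
    exact hA.det_pos.ne' hdet.symm
  -- Part 1
  have hproj : ∀ ω, proj (R * S ω) = R * H ω * R := by
    intro ω
    rw [hH]
    unfold proj
    rw [Matrix.transpose_mul, hRt]
    have hg : (S ω)ᵀ * R * (R * S ω) = (S ω)ᵀ * A * S ω := by
      calc (S ω)ᵀ * R * (R * S ω) = (S ω)ᵀ * (R * R) * S ω := by simp only [Matrix.mul_assoc]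
      _ = (S ω)ᵀ * A * S ω := by rw [hRR]
    rw [Matrix.mul_assoc ((S ω)ᵀ) R, ← Matrix.mul_assoc ((S ω)ᵀ) R (R * S ω), hg]
    simp only [Matrix.mul_assoc]
  set EP := Mexp ℙ (fun ω => proj (R * S ω)) with hEPdef
  have part1 : R * G * R = EP := by
    rw [hG, hEPdef]
    have hfe : (fun ω => proj (R * S ω)) = fun ω => R * H ω * R := funext hproj
    rw [hfe]
    exact (Mexp_conj' ℙ R H hHint).symm
  -- Facts about EP
  have hEPherm : EP.IsHermitian := Mexp_herm ℙ _ fun ω => proj_herm _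
  have hEPpd : EP.PosDef := by
    rw [← part1]
    refine Matrix.PosDef.of_dotProduct_mulVec_pos ?_ ?_
    · have : (R * G * Rᴴ).IsHermitian :=
        Matrix.isHermitian_mul_mul_conjTranspose R hGpd.isHermitian
      rwa [Matrix.conjTranspose_eq_transpose_of_trivial, hRt] at this
    · intro x hx
      have hRx : R *ᵥ x ≠ 0 := by
        intro h
        apply hx
        have h2 := congrArg (fun v => R⁻¹ *ᵥ v) h
        simpa [Matrix.mulVec_mulVec, Matrix.nonsing_inv_mul R hRdet] using h2
      have hg := hGpd.dotProduct_mulVec_pos hRx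
      rw [star_trivial] at hg ⊢
      rw [← Matrix.mulVec_mulVec, ← Matrix.mulVec_mulVec, Matrix.dotProduct_mulVec,
        ← Matrix.mulVec_transpose, hRt]
      exact hg
  clear_value EP
  have hEPle1 : ((1 : Matrix (Fin n) (Fin n) ℝ) - EP).PosSemidef := by
    have hsub : (1 : Matrix (Fin n) (Fin n) ℝ) - EP
        = Mexp ℙ (fun ω => 1 - proj (R * S ω)) := by
      ext i j
      show (1 : Matrix (Fin n) (Fin n) ℝ) i j - EP i j = ∫ ω, (1 - proj (R * S ω)) i j ∂ℙ
      have hEPij : EP i j = ∫ ω, proj (R * S ω) i j ∂ℙ := by rw [hEPdef]; rfl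
      have hpt : ∀ ω, (1 - proj (R * S ω)) i j
          = (1 : Matrix (Fin n) (Fin n) ℝ) i j - proj (R * S ω) i j := fun ω => rfl
      simp only [hpt]
      rw [integral_sub (integrable_const _) (hPint i j), hEPij]
      simp [measure_univ]
    rw [hsub]
    exact Mexp_psd ℙ _ (fun i j => (integrable_const _).sub (hPint i j))
      (fun ω => one_sub_proj_psd _)
  -- μ is positive and EP - μ•1 is PSD
  obtain ⟨⟨v, hv0, hvE⟩, hlb⟩ := hμ
  have hμpos : 0 < μ := by
    have hvv : 0 < v ⬝ᵥ v := by
      have := Matrix.dotProduct_self_star_pos_iff (v := v)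
      rw [star_trivial] at this
      exact this.mpr hv0
    have h2 : 0 < v ⬝ᵥ EP *ᵥ v := by
      have := hEPpd.dotProduct_mulVec_pos hv0
      rwa [star_trivial] at this
    rw [hvE, dotProduct_smul, smul_eq_mul] at h2
    nlinarith
  have hEPmu : (EP - μ • 1).PosSemidef :=
    sub_smul_one_psd hEPherm fun i => hlb (eigenvalues_mem_eigs hEPherm i)
  -- sandwich via the square root of EP⁻¹
  have hEPdet : IsUnit EP.det := isUnit_iff_ne_zero.mpr hEPpd.det_pos.ne'
  have hFpd : (EP⁻¹).PosDef := hEPpd.inv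
  set Q := hFpd.posSemidef.sqrt with hQdef
  have hQQ : Q * Q = EP⁻¹ := hFpd.posSemidef.sqrt_mul_self_fin
  have hQherm : Q.IsHermitian := hFpd.posSemidef.posSemidef_sqrt_fin.isHermitian
  have hQt : Qᵀ = Q := by
    rw [← Matrix.conjTranspose_eq_transpose_of_trivial]; exact hQherm.eq
  clear_value Q
  have hQdet : IsUnit Q.det := by
    have hdet : Q.det * Q.det = (EP⁻¹).det := by rw [← Matrix.det_mul, hQQ]
    refine isUnit_iff_ne_zero.mpr fun h => ?_
    rw [h, mul_zero] at hdet
    exact hFpd.det_pos.ne' hdet.symm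
  have hE : EP = Q⁻¹ * Q⁻¹ := by
    calc EP = (EP⁻¹)⁻¹ := (Matrix.nonsing_inv_nonsing_inv EP hEPdet).symm
    _ = (Q * Q)⁻¹ := by rw [hQQ]
    _ = Q⁻¹ * Q⁻¹ := Matrix.mul_inv_rev Q Q
  have hQEQ : Q * EP * Q = 1 := by
    rw [hE, ← Matrix.mul_assoc, Matrix.mul_nonsing_inv Q hQdet, Matrix.one_mul,
      Matrix.nonsing_inv_mul Q hQdet]
  have sandwich1 : ((1 : Matrix (Fin n) (Fin n) ℝ) - μ • EP⁻¹).PosSemidef := by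
    have h := hEPmu.mul_mul_conjTranspose_same Q
    rw [Matrix.conjTranspose_eq_transpose_of_trivial, hQt] at h
    have heq : Q * (EP - μ • 1) * Q = 1 - μ • EP⁻¹ := by
      rw [mul_sub, sub_mul, hQEQ, mul_smul_comm, mul_one, smul_mul_assoc, hQQ]
    rwa [heq] at h
  have sandwich2 : (EP⁻¹ - 1 : Matrix (Fin n) (Fin n) ℝ).PosSemidef := by
    have h := hEPle1.mul_mul_conjTranspose_same Q
    rw [Matrix.conjTranspose_eq_transpose_of_trivial, hQt] at h
    have heq : Q * (1 - EP) * Q = EP⁻¹ - 1 := by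
      rw [mul_sub, sub_mul, hQEQ, mul_one, hQQ]
    rwa [heq] at h
  -- express G⁻¹
  have hGinv : G⁻¹ = R * EP⁻¹ * R := by
    have hEinv : EP⁻¹ = R⁻¹ * (G⁻¹ * R⁻¹) := by
      rw [← part1, Matrix.mul_inv_rev, Matrix.mul_inv_rev]
    rw [hEinv]
    calc G⁻¹ = (R * R⁻¹) * G⁻¹ * (R⁻¹ * R) := by
          rw [Matrix.mul_nonsing_inv R hRdet, Matrix.nonsing_inv_mul R hRdet,
            Matrix.one_mul, Matrix.mul_one]
    _ = R * (R⁻¹ * (G⁻¹ * R⁻¹)) * R := by simp only [Matrix.mul_assoc]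
  -- Part 2
  have part2 : (A - μ • G⁻¹).PosSemidef := by
    have hkey : R * (1 - μ • EP⁻¹) * R = A - μ • G⁻¹ := by
      rw [mul_sub, sub_mul, mul_one, hRR, mul_smul_comm, smul_mul_assoc, ← hGinv]
    have h := sandwich1.mul_mul_conjTranspose_same R
    rw [Matrix.conjTranspose_eq_transpose_of_trivial, hRt, hkey] at h
    exact h
  -- Part 3
  have part3 : (G⁻¹ - A).PosSemidef := by
    have hkey : R * (EP⁻¹ - 1) * R = G⁻¹ - A := by
      rw [mul_sub, sub_mul, mul_one, hRR, ← hGinv]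
    have h := sandwich2.mul_mul_conjTranspose_same R
    rw [Matrix.conjTranspose_eq_transpose_of_trivial, hRt, hkey] at h
    exact h
  refine ⟨part1, part2, part3, ?_, ?_⟩
  · intro b x y
    have hp := part2.dotProduct_mulVec_nonneg (y - x)
    rw [star_trivial] at hp
    simp only [Matrix.sub_mulVec, Matrix.smul_mulVec, dotProduct_sub,
      dotProduct_smul, smul_eq_mul] at hp
    have hq := quad_id hAt b x y
    show 1 / 2 * (x ⬝ᵥ A *ᵥ x) - x ⬝ᵥ b + (A *ᵥ x - b) ⬝ᵥ (y - x)
        + μ / 2 * ((y - x) ⬝ᵥ G⁻¹ *ᵥ (y - x)) ≤ 1 / 2 * (y ⬝ᵥ A *ᵥ y) - y ⬝ᵥ b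
    linarith
  · intro b x y
    have hp := part3.dotProduct_mulVec_nonneg (y - x)
    rw [star_trivial] at hp
    simp only [Matrix.sub_mulVec, dotProduct_sub] at hp
    have hq := quad_id hAt b x y
    show 1 / 2 * (y ⬝ᵥ A *ᵥ y) - y ⬝ᵥ b
        ≤ 1 / 2 * (x ⬝ᵥ A *ᵥ x) - x ⬝ᵥ b + (A *ᵥ x - b) ⬝ᵥ (y - x)
          + 1 / 2 * ((y - x) ⬝ᵥ G⁻¹ *ᵥ (y - x))
    linarith

end
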